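/- Let T be a linear isometry of the real quadratic form x₁² + ⋯ + x_p² − x_{p+1}² − ⋯ − x_{p+q}² of signature (p, q). Then T has at most min(p, q) eigenvalues (over ℂ, counted with multiplicity) of absolute value strictly greater than 1, and at most min(p,q) of absolute value strictly less than 1; in particular at most 2·min(p,q) eigenvalues outside the unit circle, counted with multiplicity. -/

import Mathlib

open Matrix

namespace McMullenAux

open Polynomial Module

variable {n : ℕ}

/-- The hermitian form of signature `(p, n - p)` on `Fin n → ℂ`. -/
noncomputable def herm (p : ℕ) (v w : Fin n → ℂ) : ℂ :=
  ∑ i : Fin n, (if (i : ℕ) < p then (1 : ℂ) else -1) * (v i * (starRingEnd ℂ) (w i))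

lemma herm_zero_left (p : ℕ) (w : Fin n → ℂ) : herm p (0 : Fin n → ℂ) w = 0 := by
  simp [herm]

lemma herm_zero_right (p : ℕ) (v : Fin n → ℂ) : herm p v 0 = 0 := by
  simp [herm]

lemma herm_add_left (p : ℕ) (u u' w : Fin n → ℂ) :
    herm p (u + u') w = herm p u w + herm p u' w := by
  simp only [herm, ← Finset.sum_add_distrib]
  refine Finset.sum_congr rfl fun i _ => ?_
  simp only [Pi.add_apply]
  ring

lemma herm_add_right (p : ℕ) (v w w' : Fin n → ℂ) :
    herm p v (w + w') = herm p v w + herm p v w' := by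
  simp only [herm, ← Finset.sum_add_distrib]
  refine Finset.sum_congr rfl fun i _ => ?_
  simp only [Pi.add_apply, map_add]
  ring

lemma herm_expand (p : ℕ) (a b : ℂ) (u u' w w' : Fin n → ℂ) :
    herm p (a • u + u') (b • w + w') =
      a * (starRingEnd ℂ) b * herm p u w + a * herm p u w' +
        (starRingEnd ℂ) b * herm p u' w + herm p u' w' := by
  simp only [herm, Finset.mul_sum, ← Finset.sum_add_distrib]
  refine Finset.sum_congr rfl fun i _ => ?_
  simp only [Pi.add_apply, Pi.smul_apply, smul_eq_mul, map_add, _root_.map_mul]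
  ring

lemma herm_sum_left (p : ℕ) {ι : Type*} (s : Finset ι) (g : ι → (Fin n → ℂ))
    (w : Fin n → ℂ) :
    herm p (∑ i ∈ s, g i) w = ∑ i ∈ s, herm p (g i) w := by
  classical
  induction s using Finset.induction_on with
  | empty => simp [herm_zero_left]
  | @insert a s h ih => rw [Finset.sum_insert h, Finset.sum_insert h, herm_add_left, ih]

lemma herm_sum_right (p : ℕ) {ι : Type*} (s : Finset ι) (v : Fin n → ℂ)
    (g : ι → (Fin n → ℂ)) :
    herm p v (∑ i ∈ s, g i) = ∑ i ∈ s, herm p v (g i) := by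
  classical
  induction s using Finset.induction_on with
  | empty => simp [herm_zero_right]
  | @insert a s h ih => rw [Finset.sum_insert h, Finset.sum_insert h, herm_add_right, ih]

lemma herm_eq_dot (p : ℕ) (v w : Fin n → ℂ) :
    herm p v w =
      v ⬝ᵥ ((Matrix.diagonal (fun i : Fin n => if (i : ℕ) < p then (1 : ℂ) else -1))
        *ᵥ star w) := by
  simp only [herm, dotProduct, Matrix.mulVec_diagonal, Pi.star_apply, Complex.star_def]
  exact Finset.sum_congr rfl fun i _ => by ring

lemma star_mulVec_real (S : Matrix (Fin n) (Fin n) ℝ) (w : Fin n → ℂ) :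
    star ((S.map (algebraMap ℝ ℂ)) *ᵥ w) = (S.map (algebraMap ℝ ℂ)) *ᵥ star w := by
  funext i
  simp only [Pi.star_apply, Matrix.mulVec, dotProduct, Complex.star_def, map_sum,
    _root_.map_mul, Matrix.map_apply]
  refine Finset.sum_congr rfl fun j _ => ?_
  rw [show (algebraMap ℝ ℂ) (S i j) = ((S i j : ℝ) : ℂ) from rfl, Complex.conj_ofReal]

/-- The complexified matrix of an isometry of the form preserves the hermitian form. -/
lemma herm_inv (p q : ℕ) (T : Matrix (Fin (p + q)) (Fin (p + q)) ℝ)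
    (hT : Tᵀ * Matrix.diagonal (fun i : Fin (p + q) => if (i : ℕ) < p then (1 : ℝ) else -1) * T =
      Matrix.diagonal (fun i : Fin (p + q) => if (i : ℕ) < p then (1 : ℝ) else -1))
    (u w : Fin (p + q) → ℂ) :
    herm p ((T.map (algebraMap ℝ ℂ)) *ᵥ u) ((T.map (algebraMap ℝ ℂ)) *ᵥ w) = herm p u w := by
  set S := T.map (algebraMap ℝ ℂ) with hS
  set Jc := Matrix.diagonal (fun i : Fin (p + q) => if (i : ℕ) < p then (1 : ℂ) else -1) with hJc
  have hTc : Sᵀ * Jc * S = Jc := by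
    have h := congrArg (fun M => (algebraMap ℝ ℂ).mapMatrix M) hT
    simp only [RingHom.mapMatrix_apply, _root_.map_mul] at h
    rw [Matrix.transpose_map] at h
    rw [Matrix.diagonal_map (by simp)] at h
    have hfun : (fun i : Fin (p+q) => if (i : ℕ) < p then (1 : ℂ) else -1)
        = fun i : Fin (p+q) => (algebraMap ℝ ℂ) (if (i : ℕ) < p then (1 : ℝ) else -1) := by
      funext i; by_cases hi : (i : ℕ) < p <;> simp [hi]
    rw [hJc, hfun]; exact h
  rw [herm_eq_dot, herm_eq_dot, star_mulVec_real, ← hS, ← hJc, Matrix.mulVec_mulVec,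
    show S *ᵥ u = u ᵥ* Sᵀ from (Matrix.vecMul_transpose S u).symm,
    ← Matrix.dotProduct_mulVec, Matrix.mulVec_mulVec, ← Matrix.mul_assoc, hTc]

/-- Generalized eigenvectors for eigenvalues `lam`, `mu` with `lam * conj mu ≠ 1` are
orthogonal for the (invariant) hermitian form. -/
lemma herm_genEig_zero (p : ℕ) (f : Module.End ℂ (Fin n → ℂ))
    (hf : ∀ u w, herm p (f u) (f w) = herm p u w)
    {lam mu : ℂ} (hlm : lam * (starRingEnd ℂ) mu ≠ 1) :
    ∀ (N k l : ℕ) (x y : Fin n → ℂ), k + l ≤ N →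
      ((f - lam • 1) ^ k) x = 0 → ((f - mu • 1) ^ l) y = 0 → herm p x y = 0 := by
  intro N
  induction N with
  | zero =>
    intro k l x y hkl hx hy
    obtain ⟨rfl, rfl⟩ : k = 0 ∧ l = 0 := by omega
    simp only [pow_zero, Module.End.one_apply] at hx
    rw [hx, herm_zero_left]
  | succ N ih =>
    intro k l x y hkl hx hy
    rcases Nat.eq_zero_or_pos k with rfl | hk
    · simp only [pow_zero, Module.End.one_apply] at hx
      rw [hx, herm_zero_left]
    rcases Nat.eq_zero_or_pos l with rfl | hl
    · simp only [pow_zero, Module.End.one_apply] at hy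
      rw [hy, herm_zero_right]
    obtain ⟨k', rfl⟩ : ∃ k', k = k' + 1 := ⟨k - 1, by omega⟩
    obtain ⟨l', rfl⟩ : ∃ l', l = l' + 1 := ⟨l - 1, by omega⟩
    set x' := (f - lam • 1) x with hx'def
    set y' := (f - mu • 1) y with hy'def
    have hx' : ((f - lam • 1) ^ k') x' = 0 := by
      rw [hx'def, ← Module.End.mul_apply, ← pow_succ]
      exact hx
    have hy' : ((f - mu • 1) ^ l') y' = 0 := by
      rw [hy'def, ← Module.End.mul_apply, ← pow_succ]
      exact hy
    have hfx : f x = lam • x + x' := by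
      rw [hx'def]; simp [LinearMap.sub_apply, LinearMap.smul_apply]
    have hfy : f y = mu • y + y' := by
      rw [hy'def]; simp [LinearMap.sub_apply, LinearMap.smul_apply]
    have key := hf x y
    rw [hfx, hfy, herm_expand] at key
    have h1 : herm p x y' = 0 := ih (k' + 1) l' x y' (by omega) hx hy'
    have h2 : herm p x' y = 0 := ih k' (l' + 1) x' y (by omega) hx' hy
    have h3 : herm p x' y' = 0 := ih k' l' x' y' (by omega) hx' hy'
    rw [h1, h2, h3] at key
    have hfac : (1 - lam * (starRingEnd ℂ) mu) * herm p x y = 0 := by linear_combination -key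
    rcases mul_eq_zero.mp hfac with h | h
    · exact absurd (by linear_combination -h) hlm
    · exact h

lemma charpoly_toLin' (A : Matrix (Fin n) (Fin n) ℂ) :
    (Matrix.toLin' A).charpoly = A.charpoly := by
  have h := LinearMap.charpoly_toMatrix (Matrix.toLin' A) (Pi.basisFun ℂ (Fin n))
  rw [LinearMap.toMatrix_eq_toMatrix', LinearMap.toMatrix'_toLin'] at h
  exact h.symm

lemma charpoly_sub_diagonal (A : Matrix (Fin n) (Fin n) ℂ) (mu : ℂ) :
    (A - Matrix.diagonal (fun _ => mu)).charpoly = A.charpoly.comp (X + C mu) := by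
  classical
  let phi : ℂ[X] →+* ℂ[X] := (aeval (R := ℂ) (X + C mu)).toRingHom
  have hmap : (charmatrix A).map phi = charmatrix (A - Matrix.diagonal fun _ => mu) := by
    refine Matrix.ext fun i j => ?_
    by_cases h : i = j
    · subst h
      simp only [Matrix.map_apply, charmatrix_apply_eq, Matrix.sub_apply,
        Matrix.diagonal_apply_eq, map_sub, aeval_X, aeval_C, phi, AlgHom.toRingHom_eq_coe,
        RingHom.coe_coe, Polynomial.algebraMap_eq]
      ring
    · simp only [Matrix.map_apply, charmatrix_apply_ne _ _ _ h, Matrix.sub_apply,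
        Matrix.diagonal_apply_ne _ h, map_neg, aeval_C, phi, AlgHom.toRingHom_eq_coe,
        RingHom.coe_coe, sub_zero, Polynomial.algebraMap_eq]
  have hdet := RingHom.map_det phi (charmatrix A)
  rw [RingHom.mapMatrix_apply, hmap] at hdet
  rw [Matrix.charpoly, ← hdet, comp_eq_aeval]
  rfl

/-- The algebraic multiplicity of `mu` as root of the characteristic polynomial is the
dimension of the corresponding maximal generalized eigenspace. -/
lemma rootMultiplicity_eq_finrank (A : Matrix (Fin n) (Fin n) ℂ) (mu : ℂ) :
    A.charpoly.rootMultiplicity mu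
      = finrank ℂ (Module.End.maxGenEigenspace (Matrix.toLin' A) mu) := by
  have htl : Matrix.toLin' (A - Matrix.diagonal fun _ => mu)
      = Matrix.toLin' A - mu • (1 : Module.End ℂ (Fin n → ℂ)) := by
    rw [← Matrix.smul_one_eq_diagonal, map_sub, _root_.map_smul, Matrix.toLin'_one]
    rfl
  have hspace : Module.End.maxGenEigenspace (Matrix.toLin' A) mu
      = Module.End.maxGenEigenspace (Matrix.toLin' (A - Matrix.diagonal fun _ => mu)) 0 := by
    ext x
    rw [Module.End.mem_maxGenEigenspace, Module.End.mem_maxGenEigenspace, htl]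
    simp only [zero_smul, sub_zero]
  rw [hspace, LinearMap.finrank_maxGenEigenspace_zero_eq, charpoly_toLin', charpoly_sub_diagonal,
    rootMultiplicity_eq_natTrailingDegree]

variable {p q : ℕ}

lemma eq_zero_of_herm_of_lt (v : Fin (p + q) → ℂ) (hvv : herm p v v = 0)
    (hlt : ∀ i : Fin (p + q), (i : ℕ) < p → v i = 0) : v = 0 := by
  have hterm : ∀ i : Fin (p + q),
      (if (i : ℕ) < p then (1 : ℂ) else -1) * (v i * (starRingEnd ℂ) (v i))
        = -((Complex.normSq (v i) : ℝ) : ℂ) := by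
    intro i
    by_cases hi : (i : ℕ) < p
    · rw [hlt i hi]; simp
    · rw [if_neg hi, Complex.mul_conj]; ring
  rw [herm, Finset.sum_congr rfl fun i _ => hterm i] at hvv
  have h3 : (((∑ i : Fin (p + q), Complex.normSq (v i)) : ℝ) : ℂ) = 0 := by
    push_cast
    rw [← neg_eq_zero, ← Finset.sum_neg_distrib]
    exact hvv
  have hsum : ∑ i : Fin (p + q), Complex.normSq (v i) = 0 := by exact_mod_cast h3
  have hzero := (Finset.sum_eq_zero_iff_of_nonneg
    (fun i _ => Complex.normSq_nonneg (v i))).mp hsum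
  funext i
  exact Complex.normSq_eq_zero.mp (hzero i (Finset.mem_univ i))

lemma eq_zero_of_herm_of_ge (v : Fin (p + q) → ℂ) (hvv : herm p v v = 0)
    (hge : ∀ i : Fin (p + q), ¬ (i : ℕ) < p → v i = 0) : v = 0 := by
  have hterm : ∀ i : Fin (p + q),
      (if (i : ℕ) < p then (1 : ℂ) else -1) * (v i * (starRingEnd ℂ) (v i))
        = ((Complex.normSq (v i) : ℝ) : ℂ) := by
    intro i
    by_cases hi : (i : ℕ) < p
    · rw [if_pos hi, Complex.mul_conj]; ring
    · rw [hge i hi]; simp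
  rw [herm, Finset.sum_congr rfl fun i _ => hterm i] at hvv
  have h3 : (((∑ i : Fin (p + q), Complex.normSq (v i)) : ℝ) : ℂ) = 0 := by
    push_cast
    exact hvv
  have hsum : ∑ i : Fin (p + q), Complex.normSq (v i) = 0 := by exact_mod_cast h3
  have hzero := (Finset.sum_eq_zero_iff_of_nonneg
    (fun i _ => Complex.normSq_nonneg (v i))).mp hsum
  funext i
  exact Complex.normSq_eq_zero.mp (hzero i (Finset.mem_univ i))

/-- A subspace on which the hermitian form of signature `(p, q)` vanishes has
dimension at most `p`. -/
lemma finrank_le_left (W : Submodule ℂ (Fin (p + q) → ℂ))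
    (hW : ∀ v ∈ W, herm p v v = 0) : finrank ℂ W ≤ p := by
  have hinj : Function.Injective
      ((LinearMap.funLeft ℂ ℂ (Fin.castAdd q)).comp W.subtype) := by
    rw [← LinearMap.ker_eq_bot]
    refine (Submodule.eq_bot_iff _).mpr fun v hv => ?_
    have hv' : (LinearMap.funLeft ℂ ℂ (Fin.castAdd q)) (v : Fin (p + q) → ℂ) = 0 := hv
    have hlt : ∀ i : Fin (p + q), (i : ℕ) < p → (v : Fin (p + q) → ℂ) i = 0 := by
      intro i hi
      have h1 := congrFun hv' ⟨(i : ℕ), hi⟩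
      have h2 : Fin.castAdd q (⟨(i : ℕ), hi⟩ : Fin p) = i := by
        apply Fin.ext; simp
      simpa [LinearMap.funLeft_apply, h2] using h1
    exact Subtype.ext (eq_zero_of_herm_of_lt (v : Fin (p + q) → ℂ) (hW v v.2) hlt)
  calc finrank ℂ W ≤ finrank ℂ (Fin p → ℂ) :=
        LinearMap.finrank_le_finrank_of_injective hinj
    _ = p := by simp [Module.finrank_pi]

/-- A subspace on which the hermitian form of signature `(p, q)` vanishes has
dimension at most `q`. -/
lemma finrank_le_right (W : Submodule ℂ (Fin (p + q) → ℂ))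
    (hW : ∀ v ∈ W, herm p v v = 0) : finrank ℂ W ≤ q := by
  have hinj : Function.Injective
      ((LinearMap.funLeft ℂ ℂ (Fin.natAdd p)).comp W.subtype) := by
    rw [← LinearMap.ker_eq_bot]
    refine (Submodule.eq_bot_iff _).mpr fun v hv => ?_
    have hv' : (LinearMap.funLeft ℂ ℂ (Fin.natAdd p)) (v : Fin (p + q) → ℂ) = 0 := hv
    have hge : ∀ i : Fin (p + q), ¬ (i : ℕ) < p → (v : Fin (p + q) → ℂ) i = 0 := by
      intro i hi
      have hip : p ≤ (i : ℕ) := Nat.le_of_not_lt hi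
      have h1 := congrFun hv' ⟨(i : ℕ) - p, by omega⟩
      have h2 : Fin.natAdd p (⟨(i : ℕ) - p, by omega⟩ : Fin q) = i := by
        apply Fin.ext; simp; omega
      simpa [LinearMap.funLeft_apply, h2] using h1
    exact Subtype.ext (eq_zero_of_herm_of_ge (v : Fin (p + q) → ℂ) (hW v v.2) hge)
  calc finrank ℂ W ≤ finrank ℂ (Fin q → ℂ) :=
        LinearMap.finrank_le_finrank_of_injective hinj
    _ = q := by simp [Module.finrank_pi]

lemma sum_finrank_le {V : Type*} [AddCommGroup V] [Module ℂ V] [FiniteDimensional ℂ V]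
    (E : ℂ → Submodule ℂ V) (hE : iSupIndep E) (F : Finset ℂ) :
    ∑ lam ∈ F, finrank ℂ (E lam) ≤ finrank ℂ ↥(⨆ lam ∈ F, E lam) := by
  classical
  induction F using Finset.induction_on with
  | empty => simp
  | @insert a F ha ih =>
    rw [Finset.sum_insert ha]
    have hsup : (⨆ lam ∈ insert a F, E lam) = E a ⊔ ⨆ lam ∈ F, E lam := by
      rw [Finset.iSup_insert]
    have hdisj : Disjoint (E a) (⨆ lam ∈ F, E lam) := by
      have h := hE.disjoint_biSup (y := (F : Set ℂ)) (by simpa using ha)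
      simpa using h
    rw [hsup]
    calc finrank ℂ (E a) + ∑ lam ∈ F, finrank ℂ (E lam)
        ≤ finrank ℂ (E a) + finrank ℂ ↥(⨆ lam ∈ F, E lam) := Nat.add_le_add_left ih _
      _ = finrank ℂ ↥(E a ⊔ ⨆ lam ∈ F, E lam) := by
          rw [← Submodule.finrank_sup_add_finrank_inf_eq, hdisj.eq_bot, finrank_bot, add_zero]

/-- Master counting lemma: roots in a "multiplicatively non-resonant" region are at
most `min p q` in number, counted with multiplicity. -/
lemma card_filter_le (p q : ℕ) (T : Matrix (Fin (p + q)) (Fin (p + q)) ℝ)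
    (hT : Tᵀ * Matrix.diagonal (fun i : Fin (p + q) => if (i : ℕ) < p then (1 : ℝ) else -1) * T =
      Matrix.diagonal (fun i : Fin (p + q) => if (i : ℕ) < p then (1 : ℝ) else -1))
    (P : ℂ → Prop) [DecidablePred P]
    (hP : ∀ lam mu : ℂ, P lam → P mu → lam * (starRingEnd ℂ) mu ≠ 1) :
    Multiset.card (((T.map (algebraMap ℝ ℂ)).charpoly.roots).filter P) ≤ min p q := by
  classical
  set S := T.map (algebraMap ℝ ℂ) with hS
  set f := Matrix.toLin' S with hf
  have hfinv : ∀ u w, herm p (f u) (f w) = herm p u w := by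
    intro u w
    rw [hf, Matrix.toLin'_apply, Matrix.toLin'_apply, hS]
    exact herm_inv p q T hT u w
  set E := Module.End.maxGenEigenspace f with hE
  set F := ((S.charpoly.roots).filter P).toFinset with hF
  have hFP : ∀ lam ∈ F, P lam := fun lam hlam =>
    (Multiset.mem_filter.mp (Multiset.mem_toFinset.mp hlam)).2
  have hcard : Multiset.card ((S.charpoly.roots).filter P)
      = ∑ lam ∈ F, finrank ℂ (E lam) := by
    rw [← Multiset.toFinset_sum_count_eq ((S.charpoly.roots).filter P), ← hF]
    refine Finset.sum_congr rfl fun lam hlam => ?_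
    rw [Multiset.count_filter_of_pos (hFP lam hlam), Polynomial.count_roots,
      rootMultiplicity_eq_finrank, ← hf, ← hE]
  have hvan : ∀ v ∈ (⨆ lam ∈ F, E lam), herm p v v = 0 := by
    intro v hv
    rw [Submodule.mem_iSup_finset_iff_exists_sum] at hv
    obtain ⟨mvec, rfl⟩ := hv
    rw [herm_sum_left]
    refine Finset.sum_eq_zero fun lam hlam => ?_
    rw [herm_sum_right]
    refine Finset.sum_eq_zero fun mu hmu => ?_
    obtain ⟨k, hk⟩ := (Module.End.mem_maxGenEigenspace f lam _).mp (mvec lam).2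
    obtain ⟨l, hl⟩ := (Module.End.mem_maxGenEigenspace f mu _).mp (mvec mu).2
    exact herm_genEig_zero p f hfinv (hP _ _ (hFP _ hlam) (hFP _ hmu))
      (k + l) k l _ _ le_rfl hk hl
  have hmin : finrank ℂ ↥(⨆ lam ∈ F, E lam) ≤ min p q :=
    le_min (finrank_le_left _ hvan) (finrank_le_right _ hvan)
  calc Multiset.card ((S.charpoly.roots).filter P)
      = ∑ lam ∈ F, finrank ℂ (E lam) := hcard
    _ ≤ finrank ℂ ↥(⨆ lam ∈ F, E lam) :=
        sum_finrank_le E (Module.End.independent_maxGenEigenspace f) F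
    _ ≤ min p q := hmin

end McMullenAux

/-- **McMullen's Lemma 3.1.** Let `T` be a linear isometry of the real quadratic form
`x₁² + ⋯ + x_p² − x_{p+1}² − ⋯ − x_{p+q}²` of signature `(p, q)`, i.e. `Tᵀ J T = J` where
`J` is the corresponding diagonal Gram matrix. Then `T` has at most `min p q` complex
eigenvalues (counted with algebraic multiplicity, i.e. as roots of the characteristic
polynomial over `ℂ`) of absolute value `> 1`, at most `min p q` of absolute value `< 1`,
and hence at most `2 * min p q` eigenvalues outside the unit circle. -/
theorem eigenvalues_of_indefinite_isometry (p q : ℕ)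
    (T : Matrix (Fin (p + q)) (Fin (p + q)) ℝ)
    (hT : Tᵀ * Matrix.diagonal (fun i : Fin (p + q) => if (i : ℕ) < p then (1 : ℝ) else -1) * T =
      Matrix.diagonal (fun i : Fin (p + q) => if (i : ℕ) < p then (1 : ℝ) else -1)) :
    Multiset.card (((T.map (algebraMap ℝ ℂ)).charpoly.roots).filter
        (fun z => 1 < ‖z‖)) ≤ min p q ∧
    Multiset.card (((T.map (algebraMap ℝ ℂ)).charpoly.roots).filter
        (fun z => ‖z‖ < 1)) ≤ min p q ∧
    Multiset.card (((T.map (algebraMap ℝ ℂ)).charpoly.roots).filter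
        (fun z => ‖z‖ ≠ 1)) ≤ 2 * min p q := by
  have hP1 : ∀ lam mu : ℂ, 1 < ‖lam‖ → 1 < ‖mu‖ →
      lam * (starRingEnd ℂ) mu ≠ 1 := by
    intro lam mu h1 h2 h
    have habs := congrArg (‖·‖) h
    rw [norm_mul, Complex.norm_conj, norm_one] at habs
    nlinarith
  have hP2 : ∀ lam mu : ℂ, ‖lam‖ < 1 → ‖mu‖ < 1 →
      lam * (starRingEnd ℂ) mu ≠ 1 := by
    intro lam mu h1 h2 h
    have habs := congrArg (‖·‖) h
    rw [norm_mul, Complex.norm_conj, norm_one] at habs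
    nlinarith [norm_nonneg lam, norm_nonneg mu]
  have h1 := McMullenAux.card_filter_le p q T hT (fun z => 1 < ‖z‖) hP1
  have h2 := McMullenAux.card_filter_le p q T hT (fun z => ‖z‖ < 1) hP2
  refine ⟨h1, h2, ?_⟩
  set R := (T.map (algebraMap ℝ ℂ)).charpoly.roots with hR
  have hsplit : Multiset.card (R.filter (fun z => ‖z‖ ≠ 1))
      = Multiset.card (R.filter (fun z => ‖z‖ < 1))
        + Multiset.card (R.filter (fun z => 1 < ‖z‖)) := by
    have key := Multiset.filter_add_filter (fun z => ‖z‖ < 1)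
      (fun z => 1 < ‖z‖) R
    have hand : R.filter (fun z => ‖z‖ < 1 ∧ 1 < ‖z‖) = 0 :=
      Multiset.filter_eq_nil.mpr fun z _ hz => absurd (lt_trans hz.1 hz.2) (lt_irrefl _)
    have hor : R.filter (fun z => ‖z‖ < 1 ∨ 1 < ‖z‖)
        = R.filter (fun z => ‖z‖ ≠ 1) :=
      Multiset.filter_congr fun z _ => lt_or_lt_iff_ne
    rw [hand, add_zero, hor] at key
    rw [← key, Multiset.card_add]
  rw [hsplit]
  calc Multiset.card (R.filter (fun z => ‖z‖ < 1))
        + Multiset.card (R.filter (fun z => 1 < ‖z‖))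
      ≤ min p q + min p q := Nat.add_le_add h2 h1
    _ = 2 * min p q := (two_mul _).symm
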